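/- Let k be a field, n ≥ 2, and d ≥ 1. For each i with 1 ≤ i ≤ n, the polynomial obtained from t₀x₀^d + ⋯ + tₙxₙ^d by setting t_i = 0, namely t₀x₀^d + ⋯ + t_{i-1}x_{i-1}^d + t_{i+1}x_{i+1}^d + ⋯ + tₙxₙ^d, is irreducible over the field k(t₀,…,t_{i-1},t_{i+1},…,tₙ) generated by the remaining coefficients (viewed as independent transcendentals), regarded as a polynomial in x₀,…,xₙ. -/

import Mathlib

set_option maxHeartbeats 1600000
set_option synthInstance.maxHeartbeats 400000


namespace StmtAux
open Polynomial

theorem coeff_top {B : Type*} [CommRing B] (a b : B) {d : ℕ} (hd : 1 ≤ d) :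
    (C a * X ^ d + C b).coeff d = a := by
  rw [coeff_add, coeff_C_mul, coeff_X_pow, if_pos rfl, coeff_C, if_neg (by omega)]; ring

theorem coeff_bot {B : Type*} [CommRing B] (a b : B) {d : ℕ} (hd : 1 ≤ d) :
    (C a * X ^ d + C b).coeff 0 = b := by
  rw [coeff_add, coeff_C_mul, coeff_X_pow, if_neg (by omega), coeff_C, if_pos rfl]; ring

theorem coeff_mid {B : Type*} [CommRing B] (a b : B) {d m : ℕ} (h1 : m ≠ d) (h2 : m ≠ 0) :
    (C a * X ^ d + C b).coeff m = 0 := by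
  simp [coeff_add, coeff_C, coeff_C_mul, coeff_X_pow, h1, h2]

theorem natDeg {B : Type*} [CommRing B] {a : B} (b : B) (ha : a ≠ 0) {d : ℕ} (hd : 1 ≤ d) :
    (C a * X ^ d + C b).natDegree = d := by
  have h1 : (C a * X ^ d : B[X]).natDegree = d := natDegree_C_mul_X_pow d a ha
  rw [natDegree_add_C, h1]

theorem unit_of_dvd {B : Type*} [CommRing B] [IsDomain B] {π q r : B} (hπ : Prime π)
    (hq : ¬ π ∣ q) (h1 : r ∣ π) (h2 : r ∣ q) : IsUnit r := by
  obtain ⟨s, hs⟩ := h1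
  rcases (hπ.irreducible.isUnit_or_isUnit hs) with h | h
  · exact h
  · exfalso
    obtain ⟨t, ht⟩ := isUnit_iff_exists_inv.mp h
    apply hq
    have : π ∣ r := ⟨t, by rw [hs]; rw [mul_assoc, ht, mul_one]⟩
    exact this.trans h2

theorem prim {B : Type*} [CommRing B] [IsDomain B] {π q : B} (hπ : Prime π)
    (hq : ¬ π ∣ q) {d : ℕ} (hd : 1 ≤ d) : (C π * X ^ d + C q).IsPrimitive := by
  intro r hr
  rw [C_dvd_iff_dvd_coeff] at hr
  have h1 := hr d; rw [coeff_top _ _ hd] at h1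
  have h2 := hr 0; rw [coeff_bot _ _ hd] at h2
  exact unit_of_dvd hπ hq h1 h2

theorem prim' {B : Type*} [CommRing B] [IsDomain B] {π q : B} (hπ : Prime π)
    (hq : ¬ π ∣ q) {d : ℕ} (hd : 1 ≤ d) : (C q * X ^ d + C π).IsPrimitive := by
  intro r hr
  rw [C_dvd_iff_dvd_coeff] at hr
  have h1 := hr d; rw [coeff_top _ _ hd] at h1
  have h2 := hr 0; rw [coeff_bot _ _ hd] at h2
  exact unit_of_dvd hπ hq h2 h1

theorem rev_irred {B : Type*} [CommRing B] [IsDomain B] {p : B[X]}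
    (h0 : p.coeff 0 ≠ 0) (h : Irreducible p.reverse) : Irreducible p := by
  have key : ∀ c : B[X], c.coeff 0 ≠ 0 → IsUnit c.reverse → IsUnit c := by
    intro c hc hu
    obtain ⟨r, hr, hrc⟩ := Polynomial.isUnit_iff.mp hu
    have hnd : c.natDegree = 0 := by
      by_contra hnd
      have h1 : c.reverse.coeff c.natDegree = c.coeff 0 := by
        rw [reverse, coeff_reflect, revAt_le (le_refl _), Nat.sub_self]
      rw [← hrc, coeff_C, if_neg hnd] at h1
      exact hc h1.symm
    have hcC : c = C (c.coeff 0) := (Polynomial.eq_C_of_natDegree_eq_zero hnd)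
    rw [hcC] at hu ⊢
    rwa [reverse_C] at hu
  constructor
  · intro hu
    obtain ⟨r, hr, hrc⟩ := Polynomial.isUnit_iff.mp hu
    exact h.not_isUnit (by rw [← hrc, reverse_C, hrc]; exact hu)
  · intro a b hab
    have hrev : p.reverse = a.reverse * b.reverse := by rw [hab, reverse_mul_of_domain]
    have hc : a.coeff 0 * b.coeff 0 ≠ 0 := by rwa [← mul_coeff_zero, ← hab]
    rcases h.isUnit_or_isUnit hrev with hu | hu
    · exact Or.inl (key a (left_ne_zero_of_mul hc) hu)
    · exact Or.inr (key b (right_ne_zero_of_mul hc) hu)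

theorem irred_pivot {B : Type*} [CommRing B] [IsDomain B] {π q : B} (hπ : Prime π)
    (hq : ¬ π ∣ q) (hq0 : q ≠ 0) {d : ℕ} (hd : 1 ≤ d) :
    Irreducible (C π * X ^ d + C q : B[X]) := by
  have hπ0 : π ≠ 0 := hπ.ne_zero
  apply rev_irred (by rw [coeff_bot _ _ hd]; exact hq0)
  have hrev : (C π * X ^ d + C q : B[X]).reverse = C q * X ^ d + C π := by
    rw [reverse, natDeg _ hπ0 hd]
    have : (C π * X ^ d + C q : B[X]) = C π * X ^ d + C q * X ^ 0 := by ring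
    rw [this, reflect_add, reflect_C_mul_X_pow, reflect_C_mul_X_pow,
      revAt_le (le_refl d), revAt_le (Nat.zero_le d), Nat.sub_self, Nat.sub_zero, pow_zero]
    ring
  rw [hrev]
  have hdeg : (C q * X ^ d + C π : B[X]).natDegree = d := natDeg _ hq0 hd
  have hprime : (Ideal.span {π}).IsPrime := (Ideal.span_singleton_prime hπ0).mpr hπ
  apply Polynomial.IsEisensteinAt.irreducible (𝓟 := Ideal.span {π}) _ hprime
    (prim' hπ hq hd) (by omega)
  constructor
  · rw [leadingCoeff, hdeg, coeff_top _ _ hd, Ideal.mem_span_singleton]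
    exact hq
  · intro m hm
    rw [hdeg] at hm
    by_cases hm0 : m = 0
    · rw [hm0, coeff_bot _ _ hd]
      exact Ideal.mem_span_singleton.mpr dvd_rfl
    · rw [coeff_mid _ _ (by omega) hm0]
      exact Ideal.zero_mem _
  · rw [coeff_bot _ _ hd, Ideal.span_singleton_pow, Ideal.mem_span_singleton]
    intro hdvd
    obtain ⟨t, ht⟩ := hdvd
    have : (1 : B) = π * t := by
      apply mul_left_cancel₀ hπ0
      rw [mul_one]; nth_rewrite 1 [ht]; ring
    exact hπ.not_unit (IsUnit.of_mul_eq_one _ this.symm)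




theorem aux_main {A : Type*} [CommRing A] [IsDomain A] [UniqueFactorizationMonoid A]
    (K : Type*) [Field K] [Algebra A K] [IsFractionRing A K]
    {n d : ℕ} (hd : 1 ≤ d) {p : A} (hp : Prime p)
    {q : MvPolynomial (Fin n) A} (hq : ¬ (MvPolynomial.C p ∣ q)) (hq0 : q ≠ 0) :
    Irreducible ((Polynomial.C (MvPolynomial.C p) * Polynomial.X ^ d + Polynomial.C q).map
      (MvPolynomial.map (algebraMap A K))) := by
  classical
  have hπ : Prime (MvPolynomial.C p : MvPolynomial (Fin n) A) :=
    (MvPolynomial.prime_C_iff (Fin n)).mpr hp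
  set π : MvPolynomial (Fin n) A := MvPolynomial.C p with hπdef
  have hirrD : Irreducible (Polynomial.C π * Polynomial.X ^ d + Polynomial.C q) :=
    irred_pivot hπ hq hq0 hd
  -- Gauss up to N = FractionRing D
  letI := UniqueFactorizationMonoid.normalizationMonoid (α := MvPolynomial (Fin n) A)
  letI := UniqueFactorizationMonoid.toNormalizedGCDMonoid (MvPolynomial (Fin n) A)
  have hirrN : Irreducible ((Polynomial.C π * Polynomial.X ^ d + Polynomial.C q).map
      (algebraMap (MvPolynomial (Fin n) A) (FractionRing (MvPolynomial (Fin n) A)))) :=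
    (Polynomial.IsPrimitive.irreducible_iff_irreducible_map_fraction_map
      (prim hπ hq hd)).mp hirrD
  set N := FractionRing (MvPolynomial (Fin n) A) with hNdef
  set ψ : MvPolynomial (Fin n) A →+* MvPolynomial (Fin n) K :=
    MvPolynomial.map (algebraMap A K) with hψdef
  have hιinj : Function.Injective (algebraMap A K) := IsFractionRing.injective A K
  set ghom : A →+* N := (algebraMap (MvPolynomial (Fin n) A) N).comp (MvPolynomial.C) with hgdef
  have hginj : Function.Injective ghom :=
    (IsFractionRing.injective (MvPolynomial (Fin n) A) N).comp (MvPolynomial.C_injective (Fin n) A)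
  set χ : MvPolynomial (Fin n) K →+* N :=
    MvPolynomial.eval₂Hom (IsFractionRing.lift hginj)
      (fun m => algebraMap (MvPolynomial (Fin n) A) N (MvPolynomial.X m)) with hχdef
  have hcomp : χ.comp ψ = algebraMap (MvPolynomial (Fin n) A) N := by
    apply MvPolynomial.ringHom_ext
    · intro a
      show χ (ψ (MvPolynomial.C a)) = _
      rw [hψdef, MvPolynomial.map_C, hχdef, MvPolynomial.eval₂Hom_C,
        IsFractionRing.lift_algebraMap]
      rfl
    · intro m
      show χ (ψ (MvPolynomial.X m)) = _
      rw [hψdef, MvPolynomial.map_X, hχdef, MvPolynomial.eval₂Hom_X']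
  letI : Algebra (MvPolynomial (Fin n) A) (MvPolynomial (Fin n) K) :=
    MvPolynomial.algebraMvPolynomial (σ := Fin n) (R := A) (S := K)
  haveI hloc : IsLocalization
      ((nonZeroDivisors A).map (MvPolynomial.C : A →+* MvPolynomial (Fin n) A))
      (MvPolynomial (Fin n) K) :=
    MvPolynomial.isLocalization (nonZeroDivisors A) K
  have halg : (algebraMap (MvPolynomial (Fin n) A) (MvPolynomial (Fin n) K)) = ψ := rfl
  have hχinj : Function.Injective χ := by
    rw [injective_iff_map_eq_zero]
    intro z hz
    obtain ⟨⟨x, c⟩, hx⟩ := IsLocalization.surj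
      (M := (nonZeroDivisors A).map (MvPolynomial.C : A →+* MvPolynomial (Fin n) A))
      (S := MvPolynomial (Fin n) K) z
    obtain ⟨a, ha, hac⟩ := c.2
    have h3 : algebraMap (MvPolynomial (Fin n) A) N x = 0 := by
      have h1 : χ (algebraMap (MvPolynomial (Fin n) A) (MvPolynomial (Fin n) K) x)
          = algebraMap (MvPolynomial (Fin n) A) N x := by
        rw [halg, ← hcomp]; rfl
      rw [← h1, ← hx, map_mul, hz, zero_mul]
    have hx0 : x = 0 := (injective_iff_map_eq_zero _).mp
      (IsFractionRing.injective (MvPolynomial (Fin n) A) N) _ h3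
    rw [hx0, map_zero] at hx
    rcases mul_eq_zero.mp hx with h | h
    · exact h
    · exfalso
      rw [halg] at h
      apply (mem_nonZeroDivisors_iff_ne_zero.mp ha)
      apply hιinj
      rw [map_zero]
      have : MvPolynomial.C (algebraMap A K a) = (0 : MvPolynomial (Fin n) K) := by
        rw [← MvPolynomial.map_C (algebraMap A K)]
        rw [hac]
        exact h
      have := MvPolynomial.C_injective (Fin n) K (this.trans (MvPolynomial.C_0 ..).symm)
      exact this
  have h2 : Irreducible (((Polynomial.C π * Polynomial.X ^ d + Polynomial.C q).map ψ).map χ) := by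
    rw [Polynomial.map_map, hcomp]
    exact hirrN
  have hmapped : (Polynomial.C π * Polynomial.X ^ d + Polynomial.C q).map ψ
      = Polynomial.C (ψ π) * Polynomial.X ^ d + Polynomial.C (ψ q) := by
    simp [Polynomial.map_add, Polynomial.map_mul, Polynomial.map_pow]
  have hunit : IsUnit (ψ π) := by
    rw [hψdef, hπdef, MvPolynomial.map_C]
    apply IsUnit.map (MvPolynomial.C : K →+* MvPolynomial (Fin n) K)
    apply isUnit_iff_ne_zero.mpr
    intro hc
    exact hp.ne_zero (hιinj (by rw [hc, map_zero]))
  have hprimR : ((Polynomial.C π * Polynomial.X ^ d + Polynomial.C q).map ψ).IsPrimitive := by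
    rw [hmapped]
    intro r hr
    rw [Polynomial.C_dvd_iff_dvd_coeff] at hr
    have := hr d
    rw [coeff_top _ _ hd] at this
    exact isUnit_of_dvd_unit this hunit
  exact Polynomial.IsPrimitive.irreducible_of_irreducible_map_of_injective hχinj hprimR h2

end StmtAux
open MvPolynomial

/-- The polynomial `∑_{j ≠ i} t_j x_j^d` obtained from `t₀x₀^d + ⋯ + tₙxₙ^d` by setting
`t_i = 0` (for `1 ≤ i ≤ n`, i.e. `i ≠ 0`) is irreducible over the field generated by the
remaining coefficients `t_j` (`j ≠ i`), viewed as independent transcendentals; this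
expresses integrality of the fibres of `f : X → Π₂` at codimension-1 points `t_i = 0`. -/
theorem stmt_8 (k : Type) [Field k] (n d : ℕ) (hn : 2 ≤ n) (hd : 1 ≤ d)
    (i : Fin (n + 1)) (hi : i ≠ 0) :
    Irreducible
      ((∑ j : {j : Fin (n + 1) // j ≠ i},
          C (algebraMap (MvPolynomial {j : Fin (n + 1) // j ≠ i} k)
              (FractionRing (MvPolynomial {j : Fin (n + 1) // j ≠ i} k)) (X j))
            * X (j : Fin (n + 1)) ^ d :
        MvPolynomial (Fin (n + 1))
          (FractionRing (MvPolynomial {j : Fin (n + 1) // j ≠ i} k)))) := by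
  classical
  set S := {j : Fin (n + 1) // j ≠ i} with hS
  set A := MvPolynomial S k with hA
  set K := FractionRing A with hK
  have hιinj : Function.Injective (algebraMap A K) := IsFractionRing.injective A K
  set j₀ : S := ⟨0, Ne.symm hi⟩ with hj₀def
  set e' : S → Fin n := fun j => ⟨(j : Fin (n+1)).val - 1, by
    have := (j : Fin (n+1)).isLt; omega⟩ with he'def
  have hsucc : ∀ j : S, j ≠ j₀ → Fin.succ (e' j) = (j : Fin (n+1)) := by
    intro j hj
    have hv : ((j : Fin (n+1))).val ≠ 0 := by
      intro h
      exact hj (Subtype.ext (Fin.ext (by rw [h, hj₀def]; simp)))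
    apply Fin.ext
    simp only [Fin.val_succ, he'def]
    omega
  have he'inj : ∀ j j' : S, j ≠ j₀ → j' ≠ j₀ → e' j = e' j' → j = j' := by
    intro j j' hj hj' h
    apply Subtype.ext
    rw [← hsucc j hj, ← hsucc j' hj', h]
  set q : MvPolynomial (Fin n) A :=
    ∑ j ∈ Finset.univ.erase j₀, MvPolynomial.C (X j : A) * (X (e' j)) ^ d with hqdef
  -- X j₀ is prime in A
  have hXj₀ : Prime (X j₀ : A) := by
    let E := ((renameEquiv k (Equiv.optionSubtypeNe j₀)).symm.trans
      (optionEquivLeft k {j : S // j ≠ j₀}))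
    rw [← MulEquiv.prime_iff E.toMulEquiv]
    have hEX : E.toMulEquiv (X j₀) = Polynomial.X := by
      show E (X j₀) = Polynomial.X
      simp only [E, AlgEquiv.trans_apply, renameEquiv_symm, renameEquiv_apply, rename_X,
        Equiv.optionSubtypeNe_symm_self, optionEquivLeft_X_none]
    rw [hEX]
    exact Polynomial.prime_X
  -- j₁ : a second element of S
  have hn1 : (1:ℕ) < n + 1 := by omega
  have hn2 : (2:ℕ) < n + 1 := by omega
  have hvex : ∃ v : Fin (n+1), v ≠ i ∧ v.val ≠ 0 := by
    by_cases h : i = ⟨1, hn1⟩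
    · exact ⟨⟨2, hn2⟩, by rw [h]; intro hc; simpa using congrArg Fin.val hc, by simp⟩
    · exact ⟨⟨1, hn1⟩, fun hc => h hc.symm, by simp⟩
  obtain ⟨v, hvi, hv0⟩ := hvex
  set j₁ : S := ⟨v, hvi⟩ with hj₁def
  have hj₁ : j₁ ≠ j₀ := by
    intro h
    exact hv0 (by simpa [hj₁def, hj₀def] using congrArg (fun x : S => (x : Fin (n+1)).val) h)
  have hj₁mem : j₁ ∈ Finset.univ.erase j₀ := Finset.mem_erase.mpr ⟨hj₁, Finset.mem_univ _⟩
  -- coefficient extraction for q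
  have hcoeffq : MvPolynomial.coeff (Finsupp.single (e' j₁) d) q = X j₁ := by
    rw [hqdef, MvPolynomial.coeff_sum]
    rw [Finset.sum_eq_single_of_mem j₁ hj₁mem]
    · rw [C_mul_X_pow_eq_monomial, coeff_monomial, if_pos rfl]
    · intro j hj hne
      rw [C_mul_X_pow_eq_monomial, coeff_monomial, if_neg]
      intro hc
      have he : e' j = e' j₁ := Finsupp.single_left_injective (by omega : d ≠ 0) hc
      exact hne (he'inj j j₁ (Finset.mem_erase.mp hj).1 hj₁ he)
  have hq0 : q ≠ 0 := by
    intro h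
    rw [h, MvPolynomial.coeff_zero] at hcoeffq
    exact (MvPolynomial.X_ne_zero j₁) hcoeffq.symm
  -- C (X j₀) does not divide q
  have hqd : ¬ (MvPolynomial.C (X j₀ : A) ∣ q) := by
    rintro ⟨t, ht⟩
    set φ₀ : A →+* A := (aeval (fun j : S => if j = j₀ then (0:A) else X j)).toRingHom
      with hφ₀def
    set Φ : MvPolynomial (Fin n) A →+* MvPolynomial (Fin n) A := MvPolynomial.map φ₀ with hΦdef
    have hΦπ : Φ (MvPolynomial.C (X j₀ : A)) = 0 := by
      rw [hΦdef, MvPolynomial.map_C, hφ₀def]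
      show MvPolynomial.C ((aeval _) (X j₀)) = 0
      rw [aeval_X, if_pos rfl, map_zero]
    have hΦq : Φ q = q := by
      rw [hqdef, map_sum]
      apply Finset.sum_congr rfl
      intro j hj
      have hjne : j ≠ j₀ := (Finset.mem_erase.mp hj).1
      rw [hΦdef, map_mul, map_pow, MvPolynomial.map_C, MvPolynomial.map_X, hφ₀def]
      show MvPolynomial.C ((aeval _) (X j)) * _ = _
      rw [aeval_X, if_neg hjne]
    apply hq0
    have hq' := congrArg Φ ht
    rw [map_mul, hΦπ, zero_mul, hΦq] at hq'
    exact hq'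
  -- apply the main auxiliary theorem
  have hmain := StmtAux.aux_main (A := A) K hd hXj₀ hqd hq0
  -- transfer via finSuccEquiv
  rw [← MulEquiv.irreducible_iff (finSuccEquiv K n).toMulEquiv]
  have hCmap : ∀ a : K, finSuccEquiv K n (C a) = Polynomial.C (MvPolynomial.C a) := by
    intro a
    simp [finSuccEquiv_apply]
  have hψq : MvPolynomial.map (algebraMap A K) q = ∑ j ∈ Finset.univ.erase j₀,
      MvPolynomial.C (algebraMap A K (X j)) * (X (e' j) : MvPolynomial (Fin n) K) ^ d := by
    rw [hqdef, map_sum]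
    apply Finset.sum_congr rfl
    intro j hj
    rw [map_mul, map_pow, MvPolynomial.map_C, MvPolynomial.map_X]
  have hPeq : (finSuccEquiv K n).toMulEquiv
      (∑ j : S, C (algebraMap A K (X j)) * X (j : Fin (n + 1)) ^ d)
      = (Polynomial.C (MvPolynomial.C (X j₀ : A)) * Polynomial.X ^ d + Polynomial.C q).map
          (MvPolynomial.map (algebraMap A K)) := by
    show (finSuccEquiv K n) (∑ j : S, C (algebraMap A K (X j)) * X (j : Fin (n + 1)) ^ d) = _
    rw [Polynomial.map_add, Polynomial.map_mul, Polynomial.map_pow, Polynomial.map_C,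
      Polynomial.map_C, Polynomial.map_X, map_sum]
    rw [← Finset.sum_erase_add _ _ (Finset.mem_univ j₀)]
    rw [add_comm (Polynomial.C (MvPolynomial.map (algebraMap A K) (MvPolynomial.C (X j₀ : A)))
      * Polynomial.X ^ d) _]
    congr 1
    · rw [hψq, map_sum (Polynomial.C : MvPolynomial (Fin n) K →+* Polynomial (MvPolynomial (Fin n) K))]
      apply Finset.sum_congr rfl
      intro j hj
      have hjne := (Finset.mem_erase.mp hj).1
      rw [map_mul, map_pow, hCmap, ← hsucc j hjne, finSuccEquiv_X_succ, map_mul, map_pow]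
    · rw [map_mul, map_pow, hCmap]
      have h0 : (j₀ : Fin (n+1)) = 0 := rfl
      rw [h0, finSuccEquiv_X_zero, MvPolynomial.map_C]
  rw [hPeq]
  exact hmain
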